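/- Let d_n be defined by the exponential generating function Σ_{n≥0} d_n z^n/n! = (1/(1-z))·(exp(z/(1-z)) - 1). Then d_n = Σ_{ℓ=1}^{n} (n!/ℓ!)·C(n,ℓ), and in particular d_1 = 1, d_2 = 5, d_3 = 28, d_4 = 185, d_5 = 1426, d_6 = 12607. -/

import Mathlib

open PowerSeries

/-- The formal exponential exp(f) of a power series f (intended for f with zero constant
term): its n-th coefficient is the n-th coefficient of Σ_{m=0}^{n} f^m/m!, which is the
X-adic limit of the exponential partial sums. -/
noncomputable def formalExp (f : PowerSeries ℚ) : PowerSeries ℚ :=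
  PowerSeries.mk fun n =>
    PowerSeries.coeff n (∑ m ∈ Finset.range (n + 1), ((m.factorial : ℚ)⁻¹) • f ^ m)

namespace Stmt5Aux

open Finset

lemma inv_one_sub : (1 - X : PowerSeries ℚ)⁻¹ = PowerSeries.mk 1 := by
  symm
  rw [PowerSeries.eq_inv_iff_mul_eq_one (by simp)]
  exact PowerSeries.mk_one_mul_one_sub_eq_one ℚ

lemma coeff_g_pow (m k : ℕ) :
    (coeff k) ((X * (1 - X : PowerSeries ℚ)⁻¹) ^ (m + 1))
      = if m + 1 ≤ k then ((k - 1).choose m : ℚ) else 0 := by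
  rw [mul_pow, inv_one_sub, mk_one_pow_eq_mk_choose_add, coeff_X_pow_mul']
  by_cases h : m + 1 ≤ k
  · rw [if_pos h, if_pos h, coeff_mk]
    have : m + (k - (m + 1)) = k - 1 := by omega
    rw [this]
  · rw [if_neg h, if_neg h]

lemma coeff_expg (j : ℕ) (hj : 1 ≤ j) :
    (coeff j) (formalExp (X * (1 - X : PowerSeries ℚ)⁻¹) - 1)
      = ∑ m ∈ Icc 1 j, (m.factorial : ℚ)⁻¹ * ((j - 1).choose (m - 1) : ℚ) := by
  have hone : (coeff j) (1 : PowerSeries ℚ) = 0 := by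
    rw [coeff_one, if_neg (by omega)]
  rw [map_sub, hone, sub_zero, formalExp, coeff_mk, map_sum]
  rw [range_eq_Ico, Finset.sum_eq_sum_Ico_succ_bot (by omega)]
  have h0 : (coeff j) (((Nat.factorial 0 : ℚ)⁻¹) • (X * (1 - X : PowerSeries ℚ)⁻¹) ^ 0) = 0 := by
    simp [hone]
  rw [h0, zero_add, Finset.Ico_add_one_right_eq_Icc]
  refine Finset.sum_congr rfl fun m hm => ?_
  rw [mem_Icc] at hm
  obtain ⟨m', rfl⟩ : ∃ m', m = m' + 1 := ⟨m - 1, by omega⟩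
  rw [coeff_smul, coeff_g_pow, if_pos (by omega), smul_eq_mul]
  simp

lemma nat_hockey (m' : ℕ) : ∀ n, ∑ j ∈ Icc (m' + 1) n, (j - 1).choose m' = n.choose (m' + 1) := by
  intro n
  induction n with
  | zero =>
    rw [Finset.Icc_eq_empty (by omega), Finset.sum_empty, Nat.choose_eq_zero_of_lt (by omega)]
  | succ n ih =>
    by_cases h : m' + 1 ≤ n + 1
    · rw [Finset.sum_Icc_succ_top h, ih, Nat.add_sub_cancel, Nat.choose_succ_succ, add_comm]
    · rw [Finset.Icc_eq_empty (by omega), Finset.sum_empty,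
        Nat.choose_eq_zero_of_lt (by omega)]

lemma coeff_rhs (n : ℕ) :
    (coeff n) ((1 - X : PowerSeries ℚ)⁻¹ *
        (formalExp (X * (1 - X : PowerSeries ℚ)⁻¹) - 1))
      = ∑ ℓ ∈ Icc 1 n, (n.choose ℓ : ℚ) / ℓ.factorial := by
  rw [mul_comm, coeff_mul, Finset.Nat.sum_antidiagonal_eq_sum_range_succ_mk]
  have hco : ∀ i, (coeff i) ((1 - X : PowerSeries ℚ)⁻¹) = 1 := by
    intro i; rw [inv_one_sub, coeff_mk]; rfl
  simp only [hco, mul_one]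
  -- now : ∑ i ∈ range (n+1), coeff i (expg - 1)
  rw [range_eq_Ico, Finset.sum_eq_sum_Ico_succ_bot (by omega)]
  have h0 : (coeff 0) (formalExp (X * (1 - X : PowerSeries ℚ)⁻¹) - 1) = 0 := by
    rw [map_sub, formalExp, coeff_mk]
    simp
  rw [h0, zero_add, Nat.succ_eq_add_one, Finset.Ico_add_one_right_eq_Icc]
  rw [Finset.sum_congr rfl fun j hj => coeff_expg j (mem_Icc.mp hj).1]
  -- swap the double sum
  have hswap :
      (∑ j ∈ Icc 1 n, ∑ m ∈ Icc 1 j, (m.factorial : ℚ)⁻¹ * ((j - 1).choose (m - 1) : ℚ))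
        = ∑ m ∈ Icc 1 n, ∑ j ∈ Icc m n, (m.factorial : ℚ)⁻¹ * ((j - 1).choose (m - 1) : ℚ) := by
    have := Finset.sum_Ico_Ico_comm 1 (n + 1)
      (fun m j => (m.factorial : ℚ)⁻¹ * ((j - 1).choose (m - 1) : ℚ))
    simp only [Finset.Ico_add_one_right_eq_Icc] at this ⊢
    rw [← this]
  rw [hswap]
  refine Finset.sum_congr rfl fun m hm => ?_
  rw [mem_Icc] at hm
  obtain ⟨m', rfl⟩ : ∃ m', m = m' + 1 := ⟨m - 1, by omega⟩
  rw [← Finset.mul_sum, Nat.add_sub_cancel]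
  have : (∑ j ∈ Icc (m' + 1) n, (((j - 1).choose m' : ℕ) : ℚ))
      = ((n.choose (m' + 1) : ℕ) : ℚ) := by
    rw [← Nat.cast_sum, nat_hockey]
  rw [this, div_eq_inv_mul]

end Stmt5Aux

/-- If Σ_{n≥0} d_n z^n/n! = (1/(1-z))·(exp(z/(1-z)) - 1) then
d_n = Σ_{ℓ=1}^{n} (n!/ℓ!)·C(n,ℓ), and d_1 = 1, d_2 = 5, d_3 = 28, d_4 = 185,
d_5 = 1426, d_6 = 12607. -/
theorem stmt5 (d : ℕ → ℚ)
    (h : PowerSeries.mk (fun n => d n / n.factorial)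
        = (1 - PowerSeries.X)⁻¹ *
            (formalExp (PowerSeries.X * (1 - PowerSeries.X)⁻¹) - 1)) :
    (∀ n, d n = ∑ ℓ ∈ Finset.Icc 1 n, (n.factorial / ℓ.factorial : ℚ) * (n.choose ℓ : ℚ))
    ∧ d 1 = 1 ∧ d 2 = 5 ∧ d 3 = 28 ∧ d 4 = 185 ∧ d 5 = 1426 ∧ d 6 = 12607 := by
  have key : ∀ n, d n = ∑ ℓ ∈ Finset.Icc 1 n,
      (n.factorial / ℓ.factorial : ℚ) * (n.choose ℓ : ℚ) := by
    intro n
    have h1 := congrArg (PowerSeries.coeff n) h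
    rw [PowerSeries.coeff_mk, Stmt5Aux.coeff_rhs] at h1
    have hn : (n.factorial : ℚ) ≠ 0 := by
      exact_mod_cast n.factorial_ne_zero
    have h2 : d n = (∑ ℓ ∈ Finset.Icc 1 n, (n.choose ℓ : ℚ) / ℓ.factorial) * n.factorial := by
      rw [← h1, div_mul_cancel₀ _ hn]
    rw [h2, Finset.sum_mul]
    refine Finset.sum_congr rfl fun ℓ _ => ?_
    ring
  refine ⟨key, ?_, ?_, ?_, ?_, ?_, ?_⟩ <;>
  · rw [key]
    norm_num [show (2:ℕ) = 1 + 1 from rfl, Finset.sum_Icc_succ_top, Nat.factorial, Nat.choose]
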